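/- If a finite group G has odd order n > 1, or more generally has no subgroup of index 2, then the Cayley table of G has no maximal partial transversal of any length ℓ with n/2 ≤ ℓ < (3/5)n; in particular, for odd n > 5, the Cayley table of G has no maximal partial transversal of length (n+1)/2. -/
import Mathlib


/-- The Cayley table of a group `G` as a set of triples `(g, h, g*h)`. -/
def cayleyTable (G : Type*) [Group G] [Fintype G] [DecidableEq G] :
    Finset (G × G × G) :=
  Finset.univ.image (fun p : G × G => (p.1, p.2, p.1 * p.2))

/-- A partial transversal: a subset of the triples with pairwise distinct
rows, columns and symbols. -/
def IsPartialTransversal {α β γ : Type*} (L T : Finset (α × β × γ)) : Prop :=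
  T ⊆ L ∧ ∀ t ∈ T, ∀ t' ∈ T, t ≠ t' →
    t.1 ≠ t'.1 ∧ t.2.1 ≠ t'.2.1 ∧ t.2.2 ≠ t'.2.2

/-- A maximal partial transversal. -/
def IsMaximalPartialTransversal {α β γ : Type*} (L T : Finset (α × β × γ)) : Prop :=
  IsPartialTransversal L T ∧
    ∀ T' : Finset (α × β × γ), IsPartialTransversal L T' → T ⊆ T' → T' = T

open Finset

section Key
variable {G : Type*} [Group G] [Fintype G] [DecidableEq G]

/-- count |gB ∩ B| -/
private def ccnt (B : Finset G) (g : G) : ℕ := ((B.image (g * ·)) ∩ B).card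

private lemma ccnt_eq_filter (B : Finset G) (g : G) :
    ccnt B g = (B.filter fun b => g * b ∈ B).card := by
  have himg : (B.filter fun b => g * b ∈ B).image (g * ·) = (B.image (g * ·)) ∩ B := by
    ext x
    simp only [mem_image, mem_filter, mem_inter]
    constructor
    · rintro ⟨b, ⟨hb, hgb⟩, rfl⟩; exact ⟨⟨b, hb, rfl⟩, hgb⟩
    · rintro ⟨⟨b, hb, rfl⟩, hx⟩; exact ⟨b, ⟨hb, hx⟩, rfl⟩
  rw [ccnt, ← himg, card_image_of_injective _ (mul_right_injective g)]

private lemma ccnt_inv (B : Finset G) (g : G) : ccnt B g⁻¹ = ccnt B g := by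
  have himg : ((B.image (g⁻¹ * ·)) ∩ B).image (g * ·) = B ∩ (B.image (g * ·)) := by
    rw [Finset.image_inter _ _ (mul_right_injective g), Finset.image_image]
    simp [Function.comp_def]
  rw [ccnt, ccnt, ← card_image_of_injective ((B.image (g⁻¹ * ·)) ∩ B) (mul_right_injective g),
    himg, inter_comm]

lemma key_lemma (hidx : ¬ ∃ H : Subgroup G, H.index = 2)
    (A B S : Finset G) (m : ℕ) (hA : A.card = m) (hB : B.card = m)
    (hS : S.card + m ≤ Fintype.card G)
    (hmul : ∀ a ∈ A, ∀ b ∈ B, a * b ∈ S)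
    (h2m : 2 * m ≤ Fintype.card G) (h5m : 2 * Fintype.card G < 5 * m) : False := by
  set n := Fintype.card G with hn
  have hn0 : 0 < n := Fintype.card_pos
  have hm0 : 0 < m := by omega
  -- key counting estimate
  have L1 : ∀ u v : G, (∀ b ∈ B, u * b ∈ S) → (∀ b ∈ B, v * b ∈ S) →
      m < 2 * ccnt B (u⁻¹ * v) := by
    intro u v hu hv
    have himg : ((B.image (v * ·)) ∩ (B.image (u * ·))).image (u⁻¹ * ·)
        = (B.image ((u⁻¹ * v) * ·)) ∩ B := by
      rw [Finset.image_inter _ _ (mul_right_injective u⁻¹), Finset.image_image,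
        Finset.image_image]
      simp [Function.comp_def, mul_assoc]
    have hcard : ((B.image (v * ·)) ∩ (B.image (u * ·))).card = ccnt B (u⁻¹ * v) := by
      rw [ccnt, ← himg, card_image_of_injective _ (mul_right_injective u⁻¹)]
    have hsub : (B.image (v * ·)) ∪ (B.image (u * ·)) ⊆ S := by
      apply union_subset <;> (intro x hx; obtain ⟨b, hb, rfl⟩ := mem_image.mp hx)
      · exact hv b hb
      · exact hu b hb
    have h1 : (B.image (v * ·)).card = m := by
      rw [card_image_of_injective _ (mul_right_injective v), hB]
    have h2 : (B.image (u * ·)).card = m := by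
      rw [card_image_of_injective _ (mul_right_injective u), hB]
    have h3 := card_union_add_card_inter (B.image (v * ·)) (B.image (u * ·))
    have h4 : ((B.image (v * ·)) ∪ (B.image (u * ·))).card ≤ S.card := card_le_card hsub
    omega
  -- the subgroup
  have hone : m < 2 * ccnt B (1 : G) := by
    have : ccnt B (1 : G) = m := by
      rw [ccnt_eq_filter]
      have : (B.filter fun b => (1:G) * b ∈ B) = B := by
        ext x; simp [Finset.mem_filter]
      rw [this, hB]
    omega
  have hmulmem : ∀ g h' : G, m < 2 * ccnt B g → m < 2 * ccnt B h' →
      m < 2 * ccnt B (g * h') := by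
    intro g h' hg hh
    -- step a : find b b' ∈ B with g * h' * b = b'
    have hYZ : (((B.image (h' * ·)) ∩ B) ∩ ((B.image (g⁻¹ * ·)) ∩ B)).Nonempty := by
      rw [← card_pos]
      have hY : ((B.image (h' * ·)) ∩ B).card = ccnt B h' := rfl
      have hZ : ((B.image (g⁻¹ * ·)) ∩ B).card = ccnt B g := by rw [← ccnt_inv]; rfl
      have hsub : ((B.image (h' * ·)) ∩ B) ∪ ((B.image (g⁻¹ * ·)) ∩ B) ⊆ B :=
        union_subset inter_subset_right inter_subset_right
      have h3 := card_union_add_card_inter ((B.image (h' * ·)) ∩ B) ((B.image (g⁻¹ * ·)) ∩ B)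
      have h4 := card_le_card hsub
      omega
    obtain ⟨x, hx⟩ := hYZ
    simp only [mem_inter, mem_image] at hx
    obtain ⟨⟨⟨b, hb, rfl⟩, hxB⟩, ⟨b', hb', hb'x⟩, -⟩ := hx
    -- g * h' = b' * (h'*b)... careful: g⁻¹ * b' = h' * b, so g * h' * b = b'
    have hgh : g * h' * b = b' := by
      have : g * (g⁻¹ * b') = g * (h' * b) := by rw [hb'x]
      rw [← mul_assoc, mul_inv_cancel, one_mul] at this
      rw [mul_assoc, ← this]
    -- step b : find u v ∈ A with u * b' = v * b, then u⁻¹ * v = b' * b⁻¹ = g * h'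
    have hW : ((A.image (· * b')) ∩ (A.image (· * b))).Nonempty := by
      rw [← card_pos]
      have h1 : (A.image (· * b')).card = m := by
        rw [card_image_of_injective _ (mul_left_injective b'), hA]
      have h2 : (A.image (· * b)).card = m := by
        rw [card_image_of_injective _ (mul_left_injective b), hA]
      have hsub : (A.image (· * b')) ∪ (A.image (· * b)) ⊆ S := by
        apply union_subset <;> (intro x hx; obtain ⟨a, ha, rfl⟩ := mem_image.mp hx)
        · exact hmul a ha b' hb'
        · exact hmul a ha b hb
      have h3 := card_union_add_card_inter (A.image (· * b')) (A.image (· * b))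
      have h4 := card_le_card hsub
      omega
    obtain ⟨w, hw⟩ := hW
    simp only [mem_inter, mem_image] at hw
    obtain ⟨⟨u, hu, rfl⟩, v, hv, hvw⟩ := hw
    -- hvw : v * b = u * b'
    have hkey : u⁻¹ * v = g * h' := by
      have h6 : u⁻¹ * v * b = g * h' * b := by
        rw [mul_assoc, hvw, inv_mul_cancel_left, ← hgh]
      exact mul_right_cancel h6
    have := L1 u v (fun b hb => hmul u hu b hb) (fun b hb => hmul v hv b hb)
    rwa [hkey] at this
  -- assemble the subgroup
  let H : Subgroup G :=
    { carrier := {g | m < 2 * ccnt B g}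
      one_mem' := hone
      mul_mem' := fun {g} {h'} hg hh => hmulmem g h' hg hh
      inv_mem' := fun {g} hg => by
        have : m < 2 * ccnt B g := hg
        show m < 2 * ccnt B g⁻¹
        rwa [ccnt_inv] }
  have hmemH : ∀ g : G, g ∈ H ↔ m < 2 * ccnt B g := fun g => Iff.rfl
  obtain ⟨a₀, ha₀⟩ := card_pos.mp (show 0 < A.card by omega)
  have hAH : ∀ v ∈ A, a₀⁻¹ * v ∈ H := fun v hv =>
    L1 a₀ v (fun b hb => hmul a₀ ha₀ b hb) (fun b hb => hmul v hv b hb)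
  have hHcard : m ≤ Nat.card H := by
    have hsub2 : ((A.image (fun v => a₀⁻¹ * v)) : Set G) ⊆ (H : Set G) := by
      intro x hx
      simp only [coe_image, Set.mem_image, mem_coe] at hx
      obtain ⟨v, hv, rfl⟩ := hx
      exact hAH v hv
    have h2 := Set.ncard_le_ncard hsub2 (Set.toFinite _)
    rw [Set.ncard_coe_finset, card_image_of_injective _ (mul_right_injective a₀⁻¹), hA] at h2
    rwa [← SetLike.coe_sort_coe, Nat.card_coe_set_eq]
  have hindex : H.index * Nat.card H = n := by
    rw [H.index_mul_card, Nat.card_eq_fintype_card]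
  have hidx0 : H.index ≠ 0 := by
    intro h0; rw [h0, zero_mul] at hindex; omega
  have hidxle : H.index ≤ 2 := by
    by_contra hgt
    push_neg at hgt
    have h6 : 3 * Nat.card H ≤ H.index * Nat.card H := Nat.mul_le_mul_right _ (by omega)
    rw [hindex] at h6
    omega
  rcases (by omega : H.index = 1 ∨ H.index = 2) with hca | hca
  · -- H = ⊤ : contradiction by double counting
    have htop : H = ⊤ := Subgroup.index_eq_one.mp hca
    have hall : ∀ g : G, m < 2 * ccnt B g := by
      intro g
      have : g ∈ H := by rw [htop]; exact Subgroup.mem_top g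
      exact (hmemH g).mp this
    have hsum : ∑ g : G, ccnt B g = m * m := by
      calc ∑ g : G, ccnt B g = ∑ g : G, ∑ b ∈ B, if g * b ∈ B then 1 else 0 := by
            exact Finset.sum_congr rfl fun g _ => by rw [ccnt_eq_filter, card_filter]
        _ = ∑ b ∈ B, ∑ g : G, if g * b ∈ B then 1 else 0 := Finset.sum_comm
        _ = ∑ b ∈ B, m := by
            refine Finset.sum_congr rfl fun b hb => ?_
            rw [← card_filter]
            have himg : univ.filter (fun g => g * b ∈ B) = B.image (fun x => x * b⁻¹) := by
              ext g
              simp only [mem_filter, mem_univ, true_and, mem_image]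
              constructor
              · intro hgb; exact ⟨g * b, hgb, by group⟩
              · rintro ⟨x, hx, rfl⟩
                simpa [mul_assoc] using hx
            rw [himg, card_image_of_injective _ (mul_left_injective b⁻¹), hB]
        _ = m * m := by rw [Finset.sum_const, hB, smul_eq_mul]
    have hne : (univ : Finset G).Nonempty := ⟨1, mem_univ 1⟩
    have hlt := Finset.sum_lt_sum_of_nonempty hne (fun g _ => hall g)
    rw [Finset.sum_const, card_univ, smul_eq_mul, ← Finset.mul_sum, hsum, ← hn] at hlt
    -- hlt : n * m < 2 * (m * m)
    have hle : 2 * m * m ≤ n * m := Nat.mul_le_mul_right m h2m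
    rw [mul_assoc] at hle
    omega
  · exact hidx ⟨H, hca⟩

end Key

theorem stmt16 {G : Type*} [Group G] [Fintype G] [DecidableEq G]
    (h : ¬ ∃ H : Subgroup G, H.index = 2) :
    (∀ T : Finset (G × G × G), IsMaximalPartialTransversal (cayleyTable G) T →
        Fintype.card G ≤ 2 * T.card → 5 * T.card < 3 * Fintype.card G → False) ∧
      (Odd (Fintype.card G) → 5 < Fintype.card G →
        ¬ ∃ T : Finset (G × G × G), IsMaximalPartialTransversal (cayleyTable G) T ∧
          2 * T.card = Fintype.card G + 1) := by
  have main : ∀ T : Finset (G × G × G), IsMaximalPartialTransversal (cayleyTable G) T →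
      Fintype.card G ≤ 2 * T.card → 5 * T.card < 3 * Fintype.card G → False := by
    intro T hT hn2 hl5
    obtain ⟨⟨hTL, hTd⟩, hTmax⟩ := hT
    set R := T.image (fun t => t.1) with hRdef
    set C := T.image (fun t => t.2.1) with hCdef
    set Sy := T.image (fun t => t.2.2) with hSydef
    have hRcard : R.card = T.card := card_image_of_injOn (fun t ht t' ht' h12 => by
      by_contra hne; exact (hTd t (mem_coe.mp ht) t' (mem_coe.mp ht') hne).1 h12)
    have hCcard : C.card = T.card := card_image_of_injOn (fun t ht t' ht' h12 => by
      by_contra hne; exact (hTd t (mem_coe.mp ht) t' (mem_coe.mp ht') hne).2.1 h12)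
    have hScard : Sy.card = T.card := card_image_of_injOn (fun t ht t' ht' h12 => by
      by_contra hne; exact (hTd t (mem_coe.mp ht) t' (mem_coe.mp ht') hne).2.2 h12)
    have hTle : T.card ≤ Fintype.card G := hRcard ▸ card_le_univ R
    have hmul : ∀ a ∈ Rᶜ, ∀ b ∈ Cᶜ, a * b ∈ Sy := by
      intro a ha b hb
      by_contra hab
      have haR : a ∉ R := mem_compl.mp ha
      have hbC : b ∉ C := mem_compl.mp hb
      set t0 : G × G × G := (a, b, a * b) with ht0
      have ht0L : t0 ∈ cayleyTable G := mem_image.mpr ⟨(a, b), mem_univ _, rfl⟩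
      have hpt : IsPartialTransversal (cayleyTable G) (insert t0 T) := by
        constructor
        · exact insert_subset ht0L hTL
        · intro t ht t' ht' hne
          rcases mem_insert.mp ht with rfl | htT
          · rcases mem_insert.mp ht' with rfl | ht'T
            · exact absurd rfl hne
            · exact ⟨fun he => haR (by rw [show a = t'.1 from he]; exact mem_image.mpr ⟨t', ht'T, rfl⟩),
                     fun he => hbC (by rw [show b = t'.2.1 from he]; exact mem_image.mpr ⟨t', ht'T, rfl⟩),
                     fun he => hab (by rw [show a * b = t'.2.2 from he]; exact mem_image.mpr ⟨t', ht'T, rfl⟩)⟩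
          · rcases mem_insert.mp ht' with rfl | ht'T
            · exact ⟨fun he => haR (by rw [show a = t.1 from he.symm]; exact mem_image.mpr ⟨t, htT, rfl⟩),
                     fun he => hbC (by rw [show b = t.2.1 from he.symm]; exact mem_image.mpr ⟨t, htT, rfl⟩),
                     fun he => hab (by rw [show a * b = t.2.2 from he.symm]; exact mem_image.mpr ⟨t, htT, rfl⟩)⟩
            · exact hTd t htT t' ht'T hne
      have heq := hTmax _ hpt (subset_insert _ _)
      have ht0T : t0 ∈ T := heq ▸ mem_insert_self t0 T
      exact haR (mem_image.mpr ⟨t0, ht0T, rfl⟩)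
    exact key_lemma h Rᶜ Cᶜ Sy (Fintype.card G - T.card)
      (by rw [card_compl, hRcard])
      (by rw [card_compl, hCcard])
      (by rw [hScard]; omega)
      hmul (by omega) (by omega)
  refine ⟨main, fun _ h5 => ?_⟩
  rintro ⟨T, hT, hc⟩
  exact main T hT (by omega) (by omega)
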